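/- arXiv:1807.04809 — 3 statements merged into one kernel-verified Lean document; each statement's English description precedes it below -/
import Mathlib

section
/- Let β ∈ (1/2, 1) be such that 1/β is a PV number. Then there exists a constant c̄ > 0 such that for all n ≥ 1, any two distinct points of the form Σ_{k=0}^{n-1} ε_k β^k with ε_k ∈ {−1, 1} differ by at least c̄ · β^n. -/
open Polynomial IntermediateField Finset

set_option maxHeartbeats 1000000 in
lemma pv_poly_lower_bound (α : ℝ) (hα1 : 1 < α) (hint : IsIntegral ℤ α)
    (hPV : ∀ z : ℂ, aeval z (minpoly ℤ α) = 0 → z ≠ (α : ℂ) → ‖z‖ < 1) :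
    ∃ c : ℝ, 0 < c ∧ ∀ P : ℤ[X], (∀ k, |P.coeff k| ≤ 2) →
      aeval α P ≠ 0 → c ≤ |aeval α P| := by
  classical
  have hQ : IsIntegral ℚ α := hint.tower_top
  haveI : FiniteDimensional ℚ ℚ⟮α⟯ := IntermediateField.adjoin.finiteDimensional hQ
  set a : ℚ⟮α⟯ := AdjoinSimple.gen ℚ α with ha
  have haR : algebraMap ℚ⟮α⟯ ℝ a = α := AdjoinSimple.algebraMap_gen ℚ α
  have hainj : Function.Injective (algebraMap ℚ⟮α⟯ ℝ) := (algebraMap ℚ⟮α⟯ ℝ).injective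
  have haint : IsIntegral ℤ a := by
    rw [← isIntegral_algebraMap_iff hainj, haR]; exact hint
  let σ₀ : ℚ⟮α⟯ →ₐ[ℚ] ℂ := (Complex.ofRealAm.restrictScalars ℚ).comp (IntermediateField.val _)
  have hσ₀ : ∀ x : ℚ⟮α⟯, σ₀ x = ((algebraMap ℚ⟮α⟯ ℝ x : ℝ) : ℂ) := fun x => rfl
  have hσ₀a : σ₀ a = (α : ℂ) := by rw [hσ₀, haR]
  -- every embedding sends a to a root of minpoly ℤ α
  have hroot : ∀ σ : ℚ⟮α⟯ →ₐ[ℚ] ℂ, aeval (σ a) (minpoly ℤ α) = 0 := by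
    intro σ
    have h1 : aeval (σ a) (minpoly ℚ α) = 0 := by
      rw [← IntermediateField.minpoly_gen ℚ α, Polynomial.aeval_algHom_apply σ a,
        ← ha]
      exact (congrArg σ (minpoly.aeval ℚ a)).trans (map_zero σ)
    have h2 : minpoly ℚ α = (minpoly ℤ α).map (algebraMap ℤ ℚ) := by
      simpa using minpoly.isIntegrallyClosed_eq_field_fractions ℚ ℝ hint
    rwa [h2, aeval_map_algebraMap] at h1
  have hne : ∀ σ : ℚ⟮α⟯ →ₐ[ℚ] ℂ, σ ≠ σ₀ → σ a ≠ (α : ℂ) := by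
    intro σ hσ h
    apply hσ
    apply (IntermediateField.adjoin.powerBasis hQ).algHom_ext
    rw [IntermediateField.adjoin.powerBasis_gen]
    exact h.trans hσ₀a.symm
  have hlt : ∀ σ : ℚ⟮α⟯ →ₐ[ℚ] ℂ, σ ≠ σ₀ → ‖σ a‖ < 1 := fun σ hσ =>
    hPV _ (hroot σ) (hne σ hσ)
  set C : ℝ := ∏ σ ∈ Finset.univ.erase σ₀, (2 * (1 - ‖σ a‖)⁻¹) with hC
  have hC0 : 0 < C := by
    apply Finset.prod_pos
    intro σ hσ
    have h := hlt σ (Finset.ne_of_mem_erase hσ)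
    have h' : 0 < 1 - ‖σ a‖ := by linarith
    positivity
  refine ⟨C⁻¹, by positivity, ?_⟩
  intro P hcoeff hP0
  set x : ℚ⟮α⟯ := aeval a P with hx
  have hxR : algebraMap ℚ⟮α⟯ ℝ x = aeval α P := by
    have h := Polynomial.aeval_algebraMap_apply ℝ a P
    rw [haR] at h
    exact h.symm
  have hx0 : x ≠ 0 := by
    intro h
    apply hP0
    rw [← hxR, h, map_zero]
  have hxint : IsIntegral ℤ x := by
    have hmem : x ∈ Algebra.adjoin ℤ ({a} : Set ℚ⟮α⟯) := aeval_mem_adjoin_singleton ℤ a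
    have hle : Algebra.adjoin ℤ ({a} : Set ℚ⟮α⟯) ≤ integralClosure ℤ ℚ⟮α⟯ :=
      Algebra.adjoin_le (by simpa [mem_integralClosure_iff] using haint)
    exact hle hmem
  set N : ℚ := Algebra.norm ℚ x with hN
  have hN0 : N ≠ 0 := by
    rw [hN, Algebra.norm_ne_zero_iff]; exact hx0
  have hNint : IsIntegral ℤ N := Algebra.isIntegral_norm ℚ hxint
  obtain ⟨m, hm⟩ := IsIntegrallyClosed.isIntegral_iff.mp hNint
  have hm0 : m ≠ 0 := by rintro rfl; simp at hm; exact hN0 hm.symm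
  have hmN : (m : ℚ) = N := by rw [← hm]; simp
  have h1N : (1 : ℝ) ≤ |(N : ℝ)| := by
    rw [← hmN]
    push_cast
    exact_mod_cast Int.one_le_abs hm0
  have hprod : algebraMap ℚ ℂ N = ∏ σ : ℚ⟮α⟯ →ₐ[ℚ] ℂ, σ x :=
    Algebra.norm_eq_prod_embeddings ℚ ℂ x
  have hσx : ∀ σ : ℚ⟮α⟯ →ₐ[ℚ] ℂ, σ x = aeval (σ a) P := by
    intro σ
    exact (Polynomial.aeval_algHom_apply (σ.restrictScalars ℤ) a P).symm
  -- bound at each non-real embedding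
  have hbound : ∀ σ : ℚ⟮α⟯ →ₐ[ℚ] ℂ, σ ≠ σ₀ →
      ‖σ x‖ ≤ 2 * (1 - ‖σ a‖)⁻¹ := by
    intro σ hσ
    have hr := hlt σ hσ
    set r := ‖σ a‖ with hrdef
    have hr0 : 0 ≤ r := norm_nonneg _
    rw [hσx, aeval_eq_sum_range]
    calc ‖∑ i ∈ Finset.range (P.natDegree + 1), P.coeff i • (σ a) ^ i‖
        ≤ ∑ i ∈ Finset.range (P.natDegree + 1), ‖P.coeff i • (σ a) ^ i‖ :=
          norm_sum_le _ _
      _ ≤ ∑ i ∈ Finset.range (P.natDegree + 1), 2 * r ^ i := by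
          apply Finset.sum_le_sum
          intro i _
          have h2 : ‖(P.coeff i : ℂ)‖ ≤ 2 := by
            rw [Complex.norm_intCast]
            exact_mod_cast hcoeff i
          rw [zsmul_eq_mul, norm_mul, norm_pow]
          exact mul_le_mul_of_nonneg_right h2 (pow_nonneg hr0 i)
      _ = 2 * ∑ i ∈ Finset.range (P.natDegree + 1), r ^ i := by rw [Finset.mul_sum]
      _ ≤ 2 * (1 - r)⁻¹ := by
          gcongr
          have := Summable.sum_le_tsum (Finset.range (P.natDegree + 1))
            (fun i _ => pow_nonneg hr0 i) (summable_geometric_of_lt_one hr0 hr)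
          rwa [tsum_geometric_of_lt_one hr0 hr] at this
  -- put it together
  have hσ₀x : ‖σ₀ x‖ = |aeval α P| := by
    rw [hσ₀, hxR, Complex.norm_real, Real.norm_eq_abs]
  have habsN : |(N : ℝ)| = ∏ σ : ℚ⟮α⟯ →ₐ[ℚ] ℂ, ‖σ x‖ := by
    have : ‖algebraMap ℚ ℂ N‖ = ∏ σ : ℚ⟮α⟯ →ₐ[ℚ] ℂ, ‖σ x‖ := by
      rw [hprod, norm_prod]
    rwa [show (algebraMap ℚ ℂ N) = ((N : ℝ) : ℂ) by push_cast; rfl, Complex.norm_real, Real.norm_eq_abs] at this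
  have hsplit : (∏ σ : ℚ⟮α⟯ →ₐ[ℚ] ℂ, ‖σ x‖)
      = ‖σ₀ x‖ * ∏ σ ∈ Finset.univ.erase σ₀, ‖σ x‖ :=
    (Finset.mul_prod_erase Finset.univ _ (Finset.mem_univ σ₀)).symm
  have hprodle : ∏ σ ∈ Finset.univ.erase σ₀, ‖σ x‖ ≤ C := by
    apply Finset.prod_le_prod
    · intro σ _; exact norm_nonneg _
    · intro σ hσ; exact hbound σ (Finset.ne_of_mem_erase hσ)
  have hfinal : 1 ≤ |aeval α P| * C := by
    calc (1:ℝ) ≤ |(N : ℝ)| := h1N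
      _ = ‖σ₀ x‖ * ∏ σ ∈ Finset.univ.erase σ₀, ‖σ x‖ := by
          rw [habsN, hsplit]
      _ ≤ |aeval α P| * C := by
          rw [hσ₀x]
          exact mul_le_mul_of_nonneg_left hprodle (abs_nonneg _)
  rw [inv_eq_one_div, div_le_iff₀ hC0]
  linarith

def IsPVNumber (α : ℝ) : Prop :=
  1 < α ∧ IsIntegral ℤ α ∧
    ∀ z : ℂ, Polynomial.aeval z (minpoly ℤ α) = 0 → z ≠ (α : ℂ) → ‖z‖ < 1

theorem separation_of_signed_beta_sums (β : ℝ) (hβ : β ∈ Set.Ioo (1/2 : ℝ) 1)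
    (hPV : IsPVNumber (1 / β)) :
    ∃ c : ℝ, 0 < c ∧ ∀ n : ℕ, 1 ≤ n → ∀ ε ε' : Fin n → ℝ,
      (∀ k, ε k = 1 ∨ ε k = -1) → (∀ k, ε' k = 1 ∨ ε' k = -1) →
      (∑ k, ε k * β ^ (k : ℕ)) ≠ (∑ k, ε' k * β ^ (k : ℕ)) →
      c * β ^ n ≤ |(∑ k, ε k * β ^ (k : ℕ)) - (∑ k, ε' k * β ^ (k : ℕ))| := by
  classical
  obtain ⟨hβ0, hβ1⟩ := hβ
  have hβpos : (0:ℝ) < β := by linarith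
  set α : ℝ := 1/β with hαdef
  have hβα : β * α = 1 := by rw [hαdef]; field_simp
  have hα1 : 1 < α := by
    rw [hαdef, lt_div_iff₀ hβpos]
    linarith
  obtain ⟨hPV1, hPVint, hPVroots⟩ := hPV
  obtain ⟨c, hc0, hc⟩ := pv_poly_lower_bound α hα1 hPVint hPVroots
  refine ⟨c, hc0, ?_⟩
  intro n hn ε ε' hε hε' hnee
  -- integer coefficient functions
  set e : ℕ → ℤ := fun k => if h : k < n then (if ε ⟨k, h⟩ = 1 then 1 else -1) else 0 with he
  set e' : ℕ → ℤ := fun k => if h : k < n then (if ε' ⟨k, h⟩ = 1 then 1 else -1) else 0 with he'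
  have heε : ∀ k (h : k < n), ((e k : ℝ)) = ε ⟨k, h⟩ := by
    intro k h
    rw [he]
    simp only [dif_pos h]
    rcases hε ⟨k, h⟩ with h1 | h1
    · rw [if_pos h1, h1]; norm_num
    · rw [if_neg (by rw [h1]; norm_num), h1]; norm_num
  have heε' : ∀ k (h : k < n), ((e' k : ℝ)) = ε' ⟨k, h⟩ := by
    intro k h
    rw [he']
    simp only [dif_pos h]
    rcases hε' ⟨k, h⟩ with h1 | h1
    · rw [if_pos h1, h1]; norm_num
    · rw [if_neg (by rw [h1]; norm_num), h1]; norm_num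
  have habs : ∀ k, |e k - e' k| ≤ 2 := by
    intro k
    have h1 : |e k| ≤ 1 := by rw [he]; dsimp only; split_ifs <;> norm_num
    have h2 : |e' k| ≤ 1 := by rw [he']; dsimp only; split_ifs <;> norm_num
    calc |e k - e' k| ≤ |e k| + |e' k| := abs_sub _ _
      _ ≤ 2 := by linarith
  set P : Polynomial ℤ :=
    ∑ j ∈ Finset.range n, Polynomial.C (e (n-1-j) - e' (n-1-j)) * Polynomial.X ^ j with hP
  have hPcoeff : ∀ m, P.coeff m = if m ∈ Finset.range n then e (n-1-m) - e' (n-1-m) else 0 := by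
    intro m
    rw [hP, Polynomial.finset_sum_coeff]
    simp only [Polynomial.coeff_C_mul, Polynomial.coeff_X_pow, mul_ite, mul_one, mul_zero]
    rw [Finset.sum_ite_eq (Finset.range n) m (fun j => e (n-1-j) - e' (n-1-j))]
  have hPcoeffabs : ∀ m, |P.coeff m| ≤ 2 := by
    intro m
    rw [hPcoeff]
    split_ifs
    · exact habs _
    · norm_num
  have hPaeval : Polynomial.aeval α P
      = ∑ j ∈ Finset.range n, ((e (n-1-j) - e' (n-1-j) : ℤ) : ℝ) * α ^ j := by
    rw [hP, map_sum]
    apply Finset.sum_congr rfl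
    intro j _
    simp [Polynomial.aeval_C]
  -- key identity
  have hβpow : ∀ j, j < n → β ^ (n-1) * α ^ (n-1-j) = β ^ j := by
    intro j hj
    have hsplit : β ^ (n-1) = β ^ j * β ^ (n-1-j) := by
      rw [← pow_add]; congr 1; omega
    rw [hsplit, mul_assoc, ← mul_pow, hβα, one_pow, mul_one]
  have hkey : (∑ k, ε k * β ^ (k : ℕ)) - (∑ k, ε' k * β ^ (k : ℕ))
      = β ^ (n-1) * Polynomial.aeval α P := by
    have hL : (∑ k, ε k * β ^ (k : ℕ)) - (∑ k, ε' k * β ^ (k : ℕ))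
        = ∑ j ∈ Finset.range n, ((e j - e' j : ℤ) : ℝ) * β ^ j := by
      rw [← Finset.sum_sub_distrib]
      rw [Finset.sum_range fun j => ((e j - e' j : ℤ) : ℝ) * β ^ j]
      apply Finset.sum_congr rfl
      intro k _
      rw [Int.cast_sub, heε k k.isLt, heε' k k.isLt]
      ring
    rw [hL, hPaeval, Finset.mul_sum]
    rw [← Finset.sum_range_reflect
      (fun j => β ^ (n-1) * (((e (n-1-j) - e' (n-1-j) : ℤ) : ℝ) * α ^ j)) n]
    apply Finset.sum_congr rfl
    intro j hj
    rw [Finset.mem_range] at hj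
    have h1 : n - 1 - (n - 1 - j) = j := by omega
    rw [h1, ← mul_assoc, mul_comm (β ^ (n-1)) _, mul_assoc, hβpow _ hj, mul_comm]
  have hPne : Polynomial.aeval α P ≠ 0 := by
    intro h
    apply hnee
    have h2 := hkey
    rw [h, mul_zero] at h2
    linarith [h2]
  have hclb := hc P hPcoeffabs hPne
  rw [show (∑ k, ε k * β ^ (k : ℕ)) - (∑ k, ε' k * β ^ (k : ℕ))
    = β ^ (n-1) * Polynomial.aeval α P from hkey, abs_mul, abs_of_pos (pow_pos hβpos _)]
  calc c * β ^ n ≤ c * β ^ (n-1) := by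
        apply mul_le_mul_of_nonneg_left _ (le_of_lt hc0)
        exact pow_le_pow_of_le_one (le_of_lt hβpos) (le_of_lt hβ1) (by omega)
    _ ≤ β ^ (n-1) * |Polynomial.aeval α P| := by
        rw [mul_comm c (β ^ (n-1))]
        exact mul_le_mul_of_nonneg_left hclb (le_of_lt (pow_pos hβpos _))
end

section
/- Let β ∈ (1/2, 1) be the reciprocal of a PV number and p ∈ (0,1). Then the Fourier transform of the Bernoulli convolution b^p_β does not tend to zero as ω → ∞: there exists Ĉ > 0 and a sequence ω_k → ∞ with |φ(b^p_β, ω_k)| ≥ Ĉ. Consequently b^p_β is not absolutely continuous with respect to Lebesgue measure. -/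
open MeasureTheory

noncomputable def piBeta (β : ℝ) (i : ℕ → Bool) : ℝ :=
  (1 - β) * ∑' k : ℕ, (if i k then (1 : ℝ) else -1) * β ^ k

open Filter Topology

set_option maxHeartbeats 1000000

open IntermediateField in
lemma pv_decay (α : ℝ) (h : IsPVNumber α) :
    ∃ D θ : ℝ, 0 < D ∧ 0 ≤ θ ∧ θ < 1 ∧ ∀ m : ℕ, ∃ z : ℤ, |α ^ m - z| ≤ D * θ ^ m := by
  obtain ⟨hα1, hint, hconj⟩ := h
  have hAlg : IsIntegral ℚ α := hint.tower_top
  let K := ℚ⟮α⟯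
  haveI : FiniteDimensional ℚ K := adjoin.finiteDimensional hAlg
  let g : K := AdjoinSimple.gen ℚ α
  have hginj : Function.Injective (algebraMap K ℝ) := (algebraMap K ℝ).injective
  have hgmap : algebraMap K ℝ g = α := AdjoinSimple.algebraMap_gen ℚ α
  have hgint : IsIntegral ℤ g := by
    rw [← isIntegral_algebraMap_iff hginj, hgmap]; exact hint
  have hminpoly : minpoly ℤ g = minpoly ℤ α := by
    conv_rhs => rw [← hgmap]
    exact (minpoly.algebraMap_eq hginj g).symm
  let σ₀ : K →ₐ[ℚ] ℂ := (Complex.ofRealAm.restrictScalars ℚ).comp (IntermediateField.val K)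
  have hσ₀ : σ₀ g = (α : ℂ) := by
    simp only [σ₀, AlgHom.comp_apply]
    norm_cast
  -- roots property
  have hroot : ∀ σ : K →ₐ[ℚ] ℂ, Polynomial.aeval (σ g) (minpoly ℤ α) = 0 := by
    intro σ
    rw [← hminpoly]
    have := Polynomial.aeval_algHom_apply (σ.restrictScalars ℤ) g (minpoly ℤ g)
    rw [minpoly.aeval, map_zero] at this
    exact this
  -- alg hom determined by g
  have hext : ∀ σ τ : K →ₐ[ℚ] ℂ, σ g = τ g → σ = τ := by
    intro σ τ hστ
    have pb := adjoin.powerBasis hAlg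
    have : (adjoin.powerBasis hAlg).gen = g := adjoin.powerBasis_gen hAlg
    exact (adjoin.powerBasis hAlg).algHom_ext (by rw [this]; exact hστ)
  have hlt : ∀ σ : K →ₐ[ℚ] ℂ, σ ≠ σ₀ → ‖σ g‖ < 1 := by
    intro σ hσ
    refine hconj _ (hroot σ) fun hc => hσ (hext σ σ₀ (by rw [hc, hσ₀]))
  classical
  let S : Finset (K →ₐ[ℚ] ℂ) := Finset.univ.erase σ₀
  let T : Finset ℝ := insert (1/2) (S.image fun σ => ‖σ g‖)
  have hTne : T.Nonempty := Finset.insert_nonempty _ _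
  set θ : ℝ := T.max' hTne with hθdef
  have hθ0 : 0 ≤ θ :=
    le_trans (by norm_num) (T.le_max' (1/2) (Finset.mem_insert_self _ _))
  have hθ1 : θ < 1 := by
    rw [hθdef, Finset.max'_lt_iff]
    intro y hy
    rcases Finset.mem_insert.mp hy with rfl | hy
    · norm_num
    · obtain ⟨σ, hσS, rfl⟩ := Finset.mem_image.mp hy
      exact hlt σ (Finset.ne_of_mem_erase hσS)
  have hD0 : (0:ℝ) < S.card + 1 := by
    have : (0:ℝ) ≤ (S.card : ℝ) := Nat.cast_nonneg _
    linarith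
  refine ⟨S.card + 1, θ, hD0, hθ0, hθ1, ?_⟩
  intro m
  -- trace of g^m is an integer
  have htr : IsIntegral ℤ (Algebra.trace ℚ K (g ^ m)) :=
    Algebra.isIntegral_trace (hgint.pow m)
  obtain ⟨z, hz⟩ := IsIntegrallyClosed.isIntegral_iff.mp htr
  refine ⟨z, ?_⟩
  have hsum : (algebraMap ℚ ℂ) (Algebra.trace ℚ K (g ^ m)) = ∑ σ : K →ₐ[ℚ] ℂ, (σ g) ^ m := by
    rw [trace_eq_sum_embeddings (E := ℂ)]
    exact Finset.sum_congr rfl fun σ _ => map_pow σ g m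
  rw [← hz] at hsum
  have hzc : (z : ℂ) = ∑ σ : K →ₐ[ℚ] ℂ, (σ g) ^ m := by
    rw [← hsum, ← IsScalarTower.algebraMap_apply ℤ ℚ ℂ, eq_intCast]
  have hsplit : (α : ℂ) ^ m - z = -∑ σ ∈ S, (σ g) ^ m := by
    rw [hzc, ← Finset.add_sum_erase Finset.univ _ (Finset.mem_univ σ₀), hσ₀]
    ring
  have habs : |α ^ m - (z : ℝ)| = ‖(α : ℂ) ^ m - z‖ := by
    have : ((α : ℂ) ^ m - z) = ((α ^ m - z : ℝ) : ℂ) := by push_cast; ring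
    rw [this, Complex.norm_real, Real.norm_eq_abs]
  rw [habs, hsplit, norm_neg]
  have hθm : (0:ℝ) ≤ θ ^ m := pow_nonneg hθ0 m
  calc ‖∑ σ ∈ S, (σ g) ^ m‖ ≤ ∑ σ ∈ S, ‖(σ g) ^ m‖ :=
        norm_sum_le _ _
    _ ≤ ∑ σ ∈ S, θ ^ m := by
        refine Finset.sum_le_sum fun σ hσ => ?_
        rw [norm_pow]
        refine pow_le_pow_left₀ (norm_nonneg _) ?_ m
        exact T.le_max' _ (Finset.mem_insert_of_mem (Finset.mem_image_of_mem _ hσ))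
    _ = S.card * θ ^ m := by rw [Finset.sum_const, nsmul_eq_mul]
    _ ≤ (S.card + 1) * θ ^ m := by nlinarith [hθm]

lemma int_of_rat_integral {x : ℝ} (hx : IsIntegral ℤ x) {q : ℚ} (hq : x = (q : ℝ)) :
    ∃ z : ℤ, (z : ℚ) = q := by
  have h2 : IsIntegral ℤ q := by
    rw [hq] at hx
    have h3 : (q : ℝ) = algebraMap ℚ ℝ q := by rw [eq_ratCast]
    exact (isIntegral_algebraMap_iff (algebraMap ℚ ℝ).injective).mp (by rwa [h3] at hx)
  obtain ⟨z, hz⟩ := IsIntegrallyClosed.isIntegral_iff.mp h2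
  exact ⟨z, by rwa [eq_intCast] at hz⟩

section NV
variable {β : ℝ}

open Real

lemma alpha_pow_ne (hPV : IsPVNumber (1 / β)) (m : ℕ) (n : ℤ) : (1/β) ^ m ≠ (2 * n + 1) / 4 := by
  intro h
  have hq : (1/β) ^ m = ((((2 * n + 1 : ℤ) : ℚ) / 4 : ℚ) : ℝ) := by push_cast; linarith
  obtain ⟨z, hz⟩ := int_of_rat_integral (hPV.2.1.pow m) hq
  have : (4 * z : ℚ) = 2 * n + 1 := by field_simp at hz; push_cast at hz; linarith [hz]
  have : 4 * z = 2 * n + 1 := by exact_mod_cast this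
  omega

lemma cos_alpha_ne (hPV : IsPVNumber (1 / β)) (m : ℕ) : Real.cos (2 * π * (1/β) ^ m) ≠ 0 := by
  intro h
  rw [Real.cos_eq_zero_iff] at h
  obtain ⟨n, hn⟩ := h
  have hπ : (π : ℝ) ≠ 0 := Real.pi_ne_zero
  have h4 : π * (4 * (1/β) ^ m) = π * (2 * n + 1) := by nlinarith [hn]
  have h5 : 4 * (1/β) ^ m = 2 * (n:ℝ) + 1 := by
    have := mul_left_cancel₀ hπ h4
    linarith
  exact alpha_pow_ne hPV m n (by linarith)

lemma beta_pow_ne_quarter (hβ : β ∈ Set.Ioo (1/2 : ℝ) 1) (hPV : IsPVNumber (1 / β)) (i : ℕ) : β ^ i ≠ 1/4 := by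
  intro h
  obtain ⟨hβhalf, hβ1⟩ := hβ
  have hβ0 : 0 < β := by linarith
  obtain ⟨hα1, hint, hconj⟩ := hPV
  set α := 1/β with hα
  have hαpos : 0 < α := by positivity
  have hi : α ^ i = 4 := by
    rw [hα, div_pow, one_pow, h]
    norm_num
  have hα2 : α < 2 := by
    rw [hα, div_lt_iff₀ hβ0]; linarith
  have hAlg : IsIntegral ℚ α := hint.tower_top
  -- α is not rational
  have hαQ : α ∉ (algebraMap ℚ ℝ).range := by
    rintro ⟨q, hq⟩
    obtain ⟨z, hz⟩ := int_of_rat_integral hint (by rw [← hq, eq_ratCast])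
    have hzα : ((z : ℝ)) = α := by
      rw [← hq, ← hz, eq_ratCast, Rat.cast_intCast]
    have h1 : (1 : ℝ) < z := by rw [hzα]; exact hα1
    have h2 : (z : ℝ) < 2 := by rw [hzα]; exact hα2
    have : (1 : ℤ) < z := by exact_mod_cast h1
    have : z < 2 := by exact_mod_cast h2
    omega
  have hdeg1 : (minpoly ℚ α).natDegree ≠ 1 := by
    intro h1
    have : (minpoly ℚ α).degree = 1 := by
      rw [Polynomial.degree_eq_natDegree (minpoly.ne_zero hAlg), h1]
      rfl
    exact hαQ (minpoly.degree_eq_one_iff.mp this)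
  have hdegpos : 0 < (minpoly ℚ α).natDegree := minpoly.natDegree_pos hAlg
  have hdeg2 : 2 ≤ (minpoly ℚ α).natDegree := by omega
  set P := (minpoly ℚ α).map (algebraMap ℚ ℂ) with hP
  have hsplits : P.Splits := IsAlgClosed.splits _
  have hcard : P.roots.card = (minpoly ℚ α).natDegree := by
    rw [← hsplits.natDegree_eq_card_roots, hP, Polynomial.natDegree_map]
  have hnodup : P.roots.Nodup :=
    Polynomial.nodup_roots ((minpoly.irreducible hAlg).separable.map)
  -- find a root different from α
  have hzex : ∃ z ∈ P.roots, z ≠ (α : ℂ) := by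
    by_contra h'
    push_neg at h'
    have hcount : P.roots.count (α : ℂ) = P.roots.card :=
      Multiset.count_eq_card.mpr fun b hb => (h' b hb).symm
    have := Multiset.nodup_iff_count_le_one.mp hnodup (α : ℂ)
    omega
  obtain ⟨z, hzmem, hzne⟩ := hzex
  have hzroot : Polynomial.aeval z (minpoly ℚ α) = 0 := by
    have := (Polynomial.mem_roots'.mp hzmem).2
    rwa [Polynomial.IsRoot, Polynomial.eval_map, ← Polynomial.aeval_def] at this
  -- it is a root of the ℤ-minimal polynomial
  have hzrootZ : Polynomial.aeval z (minpoly ℤ α) = 0 := by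
    have hQZ : minpoly ℚ α = (minpoly ℤ α).map (algebraMap ℤ ℚ) :=
      minpoly.isIntegrallyClosed_eq_field_fractions' ℚ hint
    rwa [hQZ, Polynomial.aeval_map_algebraMap] at hzroot
  have hzlt := hconj z hzrootZ hzne
  -- z ^ i = 4
  have hdvd : minpoly ℚ α ∣ (Polynomial.X ^ i - Polynomial.C (4 : ℚ)) := by
    apply minpoly.dvd
    simp [hi]
  have hz4 : z ^ i = 4 := by
    obtain ⟨c, hc⟩ := hdvd
    have : Polynomial.aeval z (Polynomial.X ^ i - Polynomial.C (4 : ℚ)) = 0 := by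
      rw [hc, map_mul, hzroot, zero_mul]
    simpa [sub_eq_zero] using this
  have habs : ‖z‖ ^ i = 4 := by
    rw [← norm_pow, hz4]
    norm_num
  have : ‖z‖ ^ i ≤ 1 :=
    pow_le_one₀ (norm_nonneg z) hzlt.le
  linarith [habs ▸ this]

lemma beta_pow_ne_3quarter (hβ : β ∈ Set.Ioo (1/2 : ℝ) 1) (hPV : IsPVNumber (1 / β)) (i : ℕ) : β ^ i ≠ 3/4 := by
  intro h
  have hβ0 : 0 < β := by linarith [hβ.1]
  have hq : (1/β) ^ i = ((4/3 : ℚ) : ℝ) := by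
    rw [div_pow, one_pow, h]
    norm_num
  obtain ⟨z, hz⟩ := int_of_rat_integral (hPV.2.1.pow i) hq
  have : (3 * z : ℚ) = 4 := by field_simp at hz; linarith [hz]
  have : 3 * z = 4 := by exact_mod_cast this
  omega

lemma cos_beta_ne (hβ : β ∈ Set.Ioo (1/2 : ℝ) 1) (hPV : IsPVNumber (1 / β)) (i : ℕ) (hi : 1 ≤ i) : Real.cos (2 * π * β ^ i) ≠ 0 := by
  intro h
  have hβ0 : 0 < β := by linarith [hβ.1]
  have hβ1 : β < 1 := hβ.2
  have h0 : 0 < β ^ i := pow_pos hβ0 i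
  have h1 : β ^ i < 1 := pow_lt_one₀ hβ0.le hβ1 (by omega)
  rw [Real.cos_eq_zero_iff] at h
  obtain ⟨n, hn⟩ := h
  have hπ : 0 < π := Real.pi_pos
  have h4 : π * (4 * β ^ i) = π * (2 * n + 1) := by nlinarith [hn]
  have hval : β ^ i = (2 * (n:ℝ) + 1) / 4 := by
    have := mul_left_cancel₀ hπ.ne' h4
    linarith
  have hn0 : (0 : ℝ) < 2 * n + 1 := by nlinarith [hval ▸ h0]
  have hn4 : (2 * (n:ℝ) + 1) < 4 := by nlinarith [hval ▸ h1]
  have hn0' : (0:ℤ) < 2 * n + 1 := by exact_mod_cast hn0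
  have hn4' : (2 * n + 1 : ℤ) < 4 := by exact_mod_cast hn4
  have hlo : 0 ≤ n := by omega
  have hhi : n ≤ 1 := by omega
  interval_cases n
  · exact beta_pow_ne_quarter hβ hPV i (by rw [hval]; norm_num)
  · exact beta_pow_ne_3quarter hβ hPV i (by rw [hval]; norm_num)

end NV

noncomputable def gf (p t : ℝ) : ℂ :=
  p * Complex.exp (t * Complex.I) + (1 - p) * Complex.exp (-(t * Complex.I))

lemma gf_eq (p t : ℝ) :
    gf p t = (Real.cos t : ℂ) + ((2*p-1) * Real.sin t : ℝ) * Complex.I := by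
  rw [gf, show -((t:ℂ) * Complex.I) = ((-t : ℝ) : ℂ) * Complex.I by push_cast; ring,
    Complex.exp_mul_I, Complex.exp_mul_I]
  rw [Complex.ofReal_neg, Complex.cos_neg, Complex.sin_neg, ← Complex.ofReal_cos,
    ← Complex.ofReal_sin]
  push_cast
  ring

lemma norm_gf_sq (p t : ℝ) : ‖gf p t‖^2 = 1 - 4*p*(1-p)*(Real.sin t)^2 := by
  rw [gf_eq, Complex.norm_add_mul_I, Real.sq_sqrt (by positivity)]
  nlinarith [Real.sin_sq_add_cos_sq t]

lemma norm_gf_le_one {p : ℝ} (hp : p ∈ Set.Ioo (0:ℝ) 1) (t : ℝ) : ‖gf p t‖ ≤ 1 := by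
  obtain ⟨hp0, hp1⟩ := hp
  have h1 : ‖gf p t‖^2 ≤ 1 := by
    have h2 : 0 ≤ 4*p*(1-p)*(Real.sin t)^2 :=
      mul_nonneg (by nlinarith) (sq_nonneg _)
    nlinarith [norm_gf_sq p t]
  nlinarith [norm_nonneg (gf p t)]

lemma norm_gf_ge {p : ℝ} (hp : p ∈ Set.Ioo (0:ℝ) 1) (t : ℝ) :
    1 - 4*p*(1-p)*(Real.sin t)^2 ≤ ‖gf p t‖ := by
  obtain ⟨hp0, hp1⟩ := hp
  nlinarith [norm_gf_sq p t, norm_nonneg (gf p t), norm_gf_le_one ⟨hp0, hp1⟩ t]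

lemma norm_gf_pos {p : ℝ} (hp : p ∈ Set.Ioo (0:ℝ) 1) {t : ℝ} (hc : Real.cos t ≠ 0) :
    0 < ‖gf p t‖ := by
  obtain ⟨hp0, hp1⟩ := hp
  have hc2 : 0 < (Real.cos t)^2 := by
    rcases hc.lt_or_gt with h | h <;> nlinarith
  have hs2 : (Real.sin t)^2 < 1 := by nlinarith [Real.sin_sq_add_cos_sq t]
  have hq : 4*p*(1-p) ≤ 1 := by nlinarith [sq_nonneg (2*p-1)]
  nlinarith [norm_gf_sq p t, norm_nonneg (gf p t), sq_nonneg (Real.sin t)]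

section MT

variable {β p : ℝ}

lemma summable_eps (hβ0 : 0 ≤ β) (hβ1 : β < 1) (x : ℕ → Bool) :
    Summable (fun k => (if x k then (1:ℝ) else -1) * β ^ k) := by
  refine Summable.of_norm_bounded (summable_geometric_of_lt_one hβ0 hβ1) (fun k => ?_)
  rw [norm_mul]
  cases x k <;> simp [abs_of_nonneg hβ0]

lemma measurable_partial (n : ℕ) :
    Measurable (fun x : ℕ → Bool =>
      ∑ k ∈ Finset.range n, (if x k then (1:ℝ) else -1) * β ^ k) :=
  Finset.measurable_sum _ fun k _ =>
    (measurable_of_countable (fun b : Bool => (if b then (1:ℝ) else -1) * β ^ k)).comp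
      (measurable_pi_apply k)

lemma measurable_piBeta (hβ0 : 0 ≤ β) (hβ1 : β < 1) : Measurable (piBeta β) := by
  have hlim : ∀ x : ℕ → Bool,
      Tendsto (fun n => (1-β) * ∑ k ∈ Finset.range n, (if x k then (1:ℝ) else -1) * β ^ k)
        atTop (𝓝 (piBeta β x)) := fun x =>
    ((summable_eps hβ0 hβ1 x).hasSum.tendsto_sum_nat).const_mul _
  exact measurable_of_tendsto_metrizable
    (fun n => (measurable_partial n).const_mul _) (tendsto_pi_nhds.mpr hlim)

lemma integral_cyl (μ : Measure (ℕ → Bool)) [IsProbabilityMeasure μ]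
    (hp : p ∈ Set.Ioo (0:ℝ) 1)
    (hiid : ∀ n : ℕ, ∀ f : Fin n → Bool,
      μ {x | ∀ k : Fin n, x (k : ℕ) = f k}
        = ENNReal.ofReal (∏ k, if f k then p else 1 - p))
    (n : ℕ) (h : ℕ → Bool → ℂ) :
    ∫ x, ∏ k ∈ Finset.range n, h k (x k) ∂μ
      = ∏ k ∈ Finset.range n, ((p:ℂ) * h k true + ((1-p : ℝ):ℂ) * h k false) := by
  classical
  set T : (ℕ → Bool) → (Fin n → Bool) := fun x k => x k with hT
  have hTmeas : Measurable T := measurable_pi_lambda _ fun k => measurable_pi_apply _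
  haveI : IsProbabilityMeasure (μ.map T) := Measure.isProbabilityMeasure_map hTmeas.aemeasurable
  have key : ∀ x : ℕ → Bool, ∏ k ∈ Finset.range n, h k (x k) = ∏ k : Fin n, h k (T x k) :=
    fun x => (Fin.prod_univ_eq_prod_range (fun k => h k (x k)) n).symm
  have hmapsingle : ∀ y : Fin n → Bool,
      ((μ.map T) {y}).toReal = ∏ k, (if y k then p else 1 - p) := by
    intro y
    rw [Measure.map_apply hTmeas (measurableSet_singleton y)]
    have hset : T ⁻¹' {y} = {x | ∀ k : Fin n, x (k : ℕ) = y k} := by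
      ext x
      simp [hT, funext_iff]
    rw [hset, hiid n y, ENNReal.toReal_ofReal]
    exact Finset.prod_nonneg fun k _ => by
      cases y k <;> simp [hp.1.le] <;> linarith [hp.2]
  calc ∫ x, ∏ k ∈ Finset.range n, h k (x k) ∂μ
      = ∫ y, ∏ k : Fin n, h k (y k) ∂(μ.map T) := by
        rw [integral_map hTmeas.aemeasurable
          ((measurable_of_countable _).aestronglyMeasurable)]
        simp_rw [key]
    _ = ∑ y : Fin n → Bool, ((μ.map T) {y}).toReal • ∏ k : Fin n, h k (y k) :=
        integral_fintype .of_finite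
    _ = ∑ y : Fin n → Bool, ∏ k : Fin n,
          (((if y k then p else 1 - p) : ℝ) : ℂ) * h k (y k) := by
        refine Finset.sum_congr rfl fun y _ => ?_
        rw [hmapsingle y, Complex.real_smul, Complex.ofReal_prod, ← Finset.prod_mul_distrib]
    _ = ∏ k : Fin n, ∑ b : Bool, (((if b then p else 1 - p) : ℝ) : ℂ) * h k b := by
        rw [Finset.prod_univ_sum]
        rw [Fintype.piFinset_univ]
    _ = ∏ k : Fin n, ((p:ℂ) * h (k:ℕ) true + ((1-p : ℝ):ℂ) * h (k:ℕ) false) := by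
        refine Finset.prod_congr rfl fun k _ => ?_
        simp
    _ = ∏ k ∈ Finset.range n, ((p:ℂ) * h k true + ((1-p : ℝ):ℂ) * h k false) :=
        Fin.prod_univ_eq_prod_range (fun k => (p:ℂ) * h k true + ((1-p : ℝ):ℂ) * h k false) n

lemma norm_exp_I_mul (ω r : ℝ) : ‖Complex.exp (Complex.I * (ω * (r:ℂ)))‖ = 1 := by
  rw [show Complex.I * (ω * (r:ℂ)) = ((ω * r : ℝ) : ℂ) * Complex.I by push_cast; ring]
  exact Complex.norm_exp_ofReal_mul_I _

lemma char_approx (hβ : β ∈ Set.Ioo (1/2 : ℝ) 1) (hp : p ∈ Set.Ioo (0:ℝ) 1)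
    (μ : Measure (ℕ → Bool)) [IsProbabilityMeasure μ]
    (hiid : ∀ n : ℕ, ∀ f : Fin n → Bool,
      μ {x | ∀ k : Fin n, x (k : ℕ) = f k}
        = ENNReal.ofReal (∏ k, if f k then p else 1 - p)) (ω : ℝ) :
    Tendsto (fun n => ∏ k ∈ Finset.range n, gf p (ω * ((1-β) * β ^ k))) atTop
      (𝓝 (∫ x, Complex.exp (Complex.I * (ω * (piBeta β x : ℂ))) ∂μ)) := by
  obtain ⟨hβh, hβ1⟩ := hβ
  have hβ0 : (0:ℝ) ≤ β := by linarith
  set e : ℕ → (ℕ → Bool) → ℂ := fun n x => Complex.exp (Complex.I * (ω *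
    (((1-β) * ∑ k ∈ Finset.range n, (if x k then (1:ℝ) else -1) * β ^ k : ℝ) : ℂ))) with he
  have he_meas : ∀ n, AEStronglyMeasurable (e n) μ := by
    intro n
    exact (Complex.measurable_exp.comp (((Complex.measurable_ofReal.comp
      ((measurable_partial n).const_mul (1-β))).const_mul (ω:ℂ)).const_mul
      Complex.I)).aestronglyMeasurable
  have he_bound : ∀ n, ∀ᵐ x ∂μ, ‖e n x‖ ≤ 1 := by
    intro n
    exact Eventually.of_forall fun x => le_of_eq (norm_exp_I_mul ω _)
  have he_lim : ∀ᵐ x ∂μ, Tendsto (fun n => e n x) atTop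
      (𝓝 (Complex.exp (Complex.I * (ω * (piBeta β x : ℂ))))) := by
    refine Eventually.of_forall fun x => ?_
    have hsum : Tendsto (fun n => ∑ k ∈ Finset.range n, (if x k then (1:ℝ) else -1) * β ^ k)
        atTop (𝓝 (∑' k, (if x k then (1:ℝ) else -1) * β ^ k)) :=
      (summable_eps hβ0 hβ1 x).hasSum.tendsto_sum_nat
    have hcont : Continuous (fun s : ℝ => Complex.exp (Complex.I * (ω * (((1-β) * s : ℝ) : ℂ)))) := by
      fun_prop
    exact (hcont.tendsto _).comp hsum
  have hDCT := tendsto_integral_of_dominated_convergence (fun _ => (1:ℝ))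
    he_meas (integrable_const 1) he_bound he_lim
  have hEq : ∀ n, ∫ x, e n x ∂μ = ∏ k ∈ Finset.range n, gf p (ω * ((1-β) * β ^ k)) := by
    intro n
    have hprod : ∀ x : ℕ → Bool, e n x = ∏ k ∈ Finset.range n,
        (fun k (b : Bool) => Complex.exp (((ω * ((1-β) * β ^ k) : ℝ) : ℂ) * Complex.I *
          (if b then 1 else -1))) k (x k) := by
      intro x
      rw [he]
      simp only
      rw [← Complex.exp_sum]
      congr 1
      push_cast
      simp only [Finset.mul_sum]
      refine Finset.sum_congr rfl fun k _ => ?_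
      cases x k <;> simp <;> ring
    calc ∫ x, e n x ∂μ
        = ∫ x, ∏ k ∈ Finset.range n,
            (fun k (b : Bool) => Complex.exp (((ω * ((1-β) * β ^ k) : ℝ) : ℂ) * Complex.I *
              (if b then 1 else -1))) k (x k) ∂μ :=
          integral_congr_ae (Eventually.of_forall hprod)
      _ = ∏ k ∈ Finset.range n, ((p:ℂ) * Complex.exp (((ω * ((1-β) * β ^ k) : ℝ) : ℂ) *
            Complex.I * (1:ℂ)) + ((1-p : ℝ):ℂ) * Complex.exp (((ω * ((1-β) * β ^ k) : ℝ) : ℂ) *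
            Complex.I * (-1:ℂ))) := by
            have := integral_cyl μ hp hiid n (fun k (b : Bool) =>
              Complex.exp (((ω * ((1-β) * β ^ k) : ℝ) : ℂ) * Complex.I * (if b then 1 else -1)))
            simpa using this
      _ = ∏ k ∈ Finset.range n, gf p (ω * ((1-β) * β ^ k)) := by
          refine Finset.prod_congr rfl fun k _ => ?_
          rw [gf]
          norm_num
  exact hDCT.congr hEq

lemma prod_one_sub_ge (s : Finset ℕ) (u F : ℕ → ℝ)
    (hu0 : ∀ k ∈ s, 0 ≤ u k) (hu1 : ∀ k ∈ s, u k ≤ 1)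
    (hF0 : ∀ k ∈ s, 0 ≤ F k) (hF : ∀ k ∈ s, 1 - u k ≤ F k) :
    1 - ∑ k ∈ s, u k ≤ ∏ k ∈ s, F k := by
  classical
  induction s using Finset.induction_on with
  | empty => simp
  | @insert a s ha ih =>
    rw [Finset.prod_insert ha, Finset.sum_insert ha]
    have hmem : ∀ k ∈ s, k ∈ insert a s := fun k hk => Finset.mem_insert_of_mem hk
    have ih' := ih (fun k hk => hu0 k (hmem k hk)) (fun k hk => hu1 k (hmem k hk))
      (fun k hk => hF0 k (hmem k hk)) (fun k hk => hF k (hmem k hk))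
    have hP0 : 0 ≤ ∏ k ∈ s, F k := Finset.prod_nonneg fun k hk => hF0 k (hmem k hk)
    have hS0 : 0 ≤ ∑ k ∈ s, u k := Finset.sum_nonneg fun k hk => hu0 k (hmem k hk)
    have ha1 : u a ≤ 1 := hu1 a (Finset.mem_insert_self a s)
    have ha0 : 0 ≤ u a := hu0 a (Finset.mem_insert_self a s)
    have h2 : (1 - u a) * (1 - ∑ k ∈ s, u k) ≤ (1 - u a) * ∏ k ∈ s, F k :=
      mul_le_mul_of_nonneg_left ih' (by linarith)
    have h3 : (1 - u a) * ∏ k ∈ s, F k ≤ F a * ∏ k ∈ s, F k :=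
      mul_le_mul_of_nonneg_right (hF a (Finset.mem_insert_self a s)) hP0
    nlinarith

lemma geom_tail {r : ℝ} (h0 : 0 ≤ r) (h1 : r < 1) (M : ℕ) (s : Finset ℕ)
    (hs : ∀ m ∈ s, M + 1 ≤ m) : ∑ m ∈ s, r ^ m ≤ r ^ (M+1) * (1 - r)⁻¹ := by
  classical
  have hsummable : Summable (fun t : ℕ => r ^ (M + 1 + t)) := by
    simp_rw [pow_add]
    exact (summable_geometric_of_lt_one h0 h1).mul_left _
  have himg : ∑ t ∈ s.image (fun m => m - (M+1)), r ^ (M+1+t)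
      = ∑ m ∈ s, r ^ (M+1+(m-(M+1))) :=
    Finset.sum_image (fun a ha b hb hab => by
      have := hs a ha; have := hs b hb; omega)
  calc ∑ m ∈ s, r ^ m = ∑ m ∈ s, r ^ (M+1+(m-(M+1))) := by
        refine Finset.sum_congr rfl fun m hm => ?_
        congr 1
        have := hs m hm
        omega
    _ = ∑ t ∈ s.image (fun m => m - (M+1)), r ^ (M+1+t) := himg.symm
    _ ≤ ∑' t : ℕ, r ^ (M+1+t) :=
        hsummable.sum_le_tsum _ (fun t _ => pow_nonneg h0 _)
    _ = r ^ (M+1) * (1-r)⁻¹ := by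
        simp_rw [pow_add]
        rw [tsum_mul_left, tsum_geometric_of_lt_one h0 h1]

section PB
variable {β p : ℝ}

lemma prod_lower (hβ : β ∈ Set.Ioo (1/2 : ℝ) 1) (hp : p ∈ Set.Ioo (0:ℝ) 1)
    (hPV : IsPVNumber (1 / β)) :
    ∃ C : ℝ, 0 < C ∧ ∀ j N : ℕ,
      C ≤ ∏ k ∈ Finset.range N, ‖gf p (2 * Real.pi * ((1/β) ^ j * β ^ k))‖ := by
  classical
  obtain ⟨hβh, hβ1⟩ := hβ
  have hβ0 : (0:ℝ) < β := by linarith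
  set α := 1/β with hα
  have hα1 : 1 < α := by rw [hα]; rw [lt_div_iff₀ hβ0]; linarith
  have hαβ : α * β = 1 := by rw [hα]; field_simp
  obtain ⟨D, θ, hD0, hθ0, hθ1, hdec⟩ := pv_decay α hPV
  have hπ0 : 0 < Real.pi := Real.pi_pos
  -- sin bounds
  have hsa : ∀ m : ℕ, (Real.sin (2*Real.pi*α^m))^2 ≤ (4*Real.pi^2*D^2)*(θ^2)^m := by
    intro m
    obtain ⟨z, hz⟩ := hdec m
    have hshift : Real.sin (2*Real.pi*α^m) = Real.sin (2*Real.pi*(α^m - z)) := by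
      rw [show 2*Real.pi*α^m = 2*Real.pi*(α^m - z) + z*(2*Real.pi) by ring]
      exact Real.sin_add_int_mul_two_pi _ z
    have habs : |Real.sin (2*Real.pi*(α^m - z))| ≤ 2*Real.pi*(D*θ^m) := by
      refine le_trans (Real.abs_sin_le_abs) ?_
      rw [abs_mul, abs_mul]
      have h2 : |(2:ℝ)| = 2 := by norm_num
      have hπa : |Real.pi| = Real.pi := abs_of_pos hπ0
      rw [h2, hπa, mul_assoc]
      have := abs_nonneg (α^m - (z:ℝ))
      nlinarith [hz]
    have hsq : (Real.sin (2*Real.pi*(α^m - z)))^2 ≤ (2*Real.pi*(D*θ^m))^2 := by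
      rw [← sq_abs]
      have h0' : (0:ℝ) ≤ 2*Real.pi*(D*θ^m) := by positivity
      nlinarith [abs_nonneg (Real.sin (2*Real.pi*(α^m - z)))]
    rw [hshift]
    calc (Real.sin (2*Real.pi*(α^m - z)))^2 ≤ (2*Real.pi*(D*θ^m))^2 := hsq
      _ = (4*Real.pi^2*D^2)*(θ^2)^m := by
          rw [← pow_mul, pow_mul']
          ring
  have hsb : ∀ i : ℕ, (Real.sin (2*Real.pi*β^i))^2 ≤ (4*Real.pi^2)*(β^2)^i := by
    intro i
    have habs : |Real.sin (2*Real.pi*β^i)| ≤ 2*Real.pi*β^i := by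
      refine le_trans (Real.abs_sin_le_abs) ?_
      rw [abs_of_pos (by positivity)]
    have hsq : (Real.sin (2*Real.pi*β^i))^2 ≤ (2*Real.pi*β^i)^2 := by
      rw [← sq_abs]
      nlinarith [abs_nonneg (Real.sin (2*Real.pi*β^i))]
    calc (Real.sin (2*Real.pi*β^i))^2 ≤ (2*Real.pi*β^i)^2 := hsq
      _ = (4*Real.pi^2)*(β^2)^i := by
          rw [← pow_mul, pow_mul']
          ring
  set r := max (θ^2) (β^2) with hr
  have hr0 : 0 ≤ r := le_trans (sq_nonneg θ) (le_max_left _ _)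
  have hr1 : r < 1 := by
    rw [hr, max_lt_iff]
    constructor
    · nlinarith
    · nlinarith
  set E := 4*Real.pi^2*(D^2+1) with hE
  have hE0 : 0 < E := by positivity
  have hinv0 : 0 ≤ (1-r)⁻¹ := by
    rw [inv_nonneg]
    linarith
  -- choose M
  obtain ⟨M, hM⟩ : ∃ M : ℕ, E * (1-r)⁻¹ * r^M < 1/4 := by
    have htend : Tendsto (fun M : ℕ => E * (1-r)⁻¹ * r^M) atTop (𝓝 0) := by
      have := tendsto_pow_atTop_nhds_zero_of_lt_one hr0 hr1
      simpa using this.const_mul (E * (1-r)⁻¹)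
    exact ((htend.eventually (gt_mem_nhds (by norm_num : (0:ℝ) < 1/4))).exists)
  -- bad-factor minimum
  set Tfin : Finset ℝ := ((Finset.range (M+1)).image fun m => ‖gf p (2*Real.pi*α^m)‖)
      ∪ ((Finset.range (M+1)).image fun i => ‖gf p (2*Real.pi*β^i)‖) with hTfin
  have hTne : Tfin.Nonempty := by
    refine ⟨‖gf p (2*Real.pi*α^0)‖, Finset.mem_union_left _ ?_⟩
    exact Finset.mem_image_of_mem _ (Finset.mem_range.mpr (by omega))
  set c := Tfin.min' hTne with hc
  have hc0 : 0 < c := by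
    rw [hc, Finset.lt_min'_iff]
    intro y hy
    rw [hTfin, Finset.mem_union] at hy
    rcases hy with hy | hy
    · obtain ⟨m, _, rfl⟩ := Finset.mem_image.mp hy
      exact norm_gf_pos hp (cos_alpha_ne hPV m)
    · obtain ⟨i, _, rfl⟩ := Finset.mem_image.mp hy
      rcases Nat.eq_zero_or_pos i with rfl | hi
      · refine norm_gf_pos hp ?_
        norm_num [Real.cos_two_pi]
      · exact norm_gf_pos hp (cos_beta_ne ⟨hβh, hβ1⟩ hPV i hi)
  have hc1 : c ≤ 1 := by
    refine le_trans (Finset.min'_le _ ‖gf p (2*Real.pi*α^0)‖ ?_) (norm_gf_le_one hp _)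
    exact Finset.mem_union_left _ (Finset.mem_image_of_mem _ (Finset.mem_range.mpr (by omega)))
  refine ⟨c^(2*M+1) * (1/2), by positivity, ?_⟩
  intro j N
  have hq0 : (0:ℝ) ≤ 4*p*(1-p) := by nlinarith [hp.1, hp.2]
  have hq1 : 4*p*(1-p) ≤ 1 := by nlinarith [sq_nonneg (2*p-1)]
  -- the argument simplification
  have hsplit_arg : ∀ k : ℕ, α^j * β^k = if k ≤ j then α^(j-k) else β^(k-j) := by
    intro k
    split_ifs with h
    · have h1 : α^j = α^(j-k) * α^k := by
        rw [← pow_add]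
        congr 1
        omega
      rw [h1, mul_assoc, ← mul_pow, hαβ, one_pow, mul_one]
    · have h1 : β^k = β^(k-j) * β^j := by
        rw [← pow_add]
        congr 1
        omega
      rw [h1, show α^j * (β^(k-j) * β^j) = (α^j*β^j) * β^(k-j) by ring,
        ← mul_pow, hαβ, one_pow, one_mul]
  set Bad : ℕ → Prop := fun k => j ≤ k + M ∧ k ≤ j + M with hBad
  have hdec_bad : DecidablePred Bad := fun k => instDecidableAnd
  -- bad part
  have hbadsub : (Finset.range N).filter Bad ⊆ Finset.Icc (j-M) (j+M) := by
    intro k hk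
    rw [Finset.mem_filter] at hk
    rw [Finset.mem_Icc]
    omega
  have hbadcard : ((Finset.range N).filter Bad).card ≤ 2*M+1 := by
    refine le_trans (Finset.card_le_card hbadsub) ?_
    rw [Nat.card_Icc]
    omega
  have hbadbound : c^(2*M+1) ≤ ∏ k ∈ (Finset.range N).filter Bad,
      ‖gf p (2*Real.pi*(α^j * β^k))‖ := by
    have hstep : ∀ k ∈ (Finset.range N).filter Bad,
        c ≤ ‖gf p (2*Real.pi*(α^j * β^k))‖ := by
      intro k hk
      rw [Finset.mem_filter] at hk
      obtain ⟨-, hk1, hk2⟩ := hk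
      rw [hsplit_arg k]
      by_cases hkj : k ≤ j
      · rw [if_pos hkj]
        refine Finset.min'_le _ _ (Finset.mem_union_left _ ?_)
        exact Finset.mem_image_of_mem _ (Finset.mem_range.mpr (by omega))
      · rw [if_neg hkj]
        refine Finset.min'_le _ _ (Finset.mem_union_right _ ?_)
        exact Finset.mem_image_of_mem _ (Finset.mem_range.mpr (by omega))
    calc c^(2*M+1) ≤ c^(((Finset.range N).filter Bad).card) :=
          pow_le_pow_of_le_one hc0.le hc1 hbadcard
      _ = ∏ k ∈ (Finset.range N).filter Bad, c := (Finset.prod_const c).symm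
      _ ≤ _ := Finset.prod_le_prod (fun k _ => hc0.le) hstep
  -- good part
  set good := (Finset.range N).filter (fun k => ¬ Bad k) with hgood
  set u : ℕ → ℝ := fun k => 4*p*(1-p)*(Real.sin (2*Real.pi*(α^j * β^k)))^2 with hu
  have hgoodbound : (1:ℝ)/2 ≤ ∏ k ∈ good, ‖gf p (2*Real.pi*(α^j * β^k))‖ := by
    have hsum_half : ∑ k ∈ good, u k ≤ 1/2 := by
      rw [← Finset.sum_filter_add_sum_filter_not good (fun k => k ≤ j)]
      have hA : ∑ k ∈ good.filter (fun k => k ≤ j), u k ≤ 1/4 := by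
        have hbound : ∀ k ∈ good.filter (fun k => k ≤ j), u k ≤ E * r^(j-k) := by
          intro k hk
          rw [Finset.mem_filter] at hk
          obtain ⟨hkgood, hkj⟩ := hk
          rw [hgood, Finset.mem_filter, hBad] at hkgood
          have hdk : M + 1 ≤ j - k := by omega
          have harg : α^j * β^k = α^(j-k) := by rw [hsplit_arg k, if_pos hkj]
          rw [hu]
          simp only
          rw [harg]
          have h1 : (Real.sin (2*Real.pi*α^(j-k)))^2 ≤ (4*Real.pi^2*D^2)*(θ^2)^(j-k) :=
            hsa (j-k)
          have h2 : (θ^2)^(j-k) ≤ r^(j-k) :=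
            pow_le_pow_left₀ (sq_nonneg θ) (le_max_left _ _) _
          have h3 : (4*Real.pi^2*D^2) ≤ E := by rw [hE]; nlinarith [sq_nonneg Real.pi]
          have hr_pow0 : (0:ℝ) ≤ r^(j-k) := pow_nonneg hr0 _
          have hθ_pow0 : (0:ℝ) ≤ (θ^2)^(j-k) := pow_nonneg (sq_nonneg θ) _
          nlinarith [sq_nonneg (Real.sin (2*Real.pi*α^(j-k)))]
        have hd_inj : ∀ a ∈ good.filter (fun k => k ≤ j), ∀ b ∈ good.filter (fun k => k ≤ j),
            j - a = j - b → a = b := by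
          intro a ha b hb hab
          rw [Finset.mem_filter] at ha hb
          omega
        have himg : ∑ m ∈ (good.filter (fun k => k ≤ j)).image (fun k => j - k), r^m
            = ∑ k ∈ good.filter (fun k => k ≤ j), r^(j-k) := Finset.sum_image hd_inj
        have hmem : ∀ m ∈ (good.filter (fun k => k ≤ j)).image (fun k => j - k), M+1 ≤ m := by
          intro m hm
          obtain ⟨k, hk, rfl⟩ := Finset.mem_image.mp hm
          rw [Finset.mem_filter] at hk
          obtain ⟨hkgood, hkj⟩ := hk
          rw [hgood, Finset.mem_filter, hBad] at hkgood
          omega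
        calc ∑ k ∈ good.filter (fun k => k ≤ j), u k
            ≤ ∑ k ∈ good.filter (fun k => k ≤ j), E * r^(j-k) :=
              Finset.sum_le_sum hbound
          _ = E * ∑ k ∈ good.filter (fun k => k ≤ j), r^(j-k) := by
              rw [Finset.mul_sum]
          _ = E * ∑ m ∈ (good.filter (fun k => k ≤ j)).image (fun k => j - k), r^m := by
              rw [himg]
          _ ≤ E * (r^(M+1) * (1-r)⁻¹) :=
              mul_le_mul_of_nonneg_left (geom_tail hr0 hr1 M _ hmem) hE0.le
          _ ≤ 1/4 := by
              have hrM : r^(M+1) ≤ r^M := by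
                rw [pow_succ]
                nlinarith [pow_nonneg hr0 M]
              have h5 : E * (r^(M+1) * (1-r)⁻¹) ≤ E * (1-r)⁻¹ * r^M := by
                have := mul_le_mul_of_nonneg_left hrM (mul_nonneg hE0.le hinv0)
                nlinarith [this]
              linarith [hM]
      have hB : ∑ k ∈ good.filter (fun k => ¬ k ≤ j), u k ≤ 1/4 := by
        have hbound : ∀ k ∈ good.filter (fun k => ¬ k ≤ j), u k ≤ E * r^(k-j) := by
          intro k hk
          rw [Finset.mem_filter] at hk
          obtain ⟨hkgood, hkj⟩ := hk
          rw [hgood, Finset.mem_filter, hBad] at hkgood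
          have harg : α^j * β^k = β^(k-j) := by rw [hsplit_arg k, if_neg hkj]
          rw [hu]
          simp only
          rw [harg]
          have h1 : (Real.sin (2*Real.pi*β^(k-j)))^2 ≤ (4*Real.pi^2)*(β^2)^(k-j) := hsb (k-j)
          have h2 : (β^2)^(k-j) ≤ r^(k-j) :=
            pow_le_pow_left₀ (sq_nonneg β) (le_max_right _ _) _
          have h3 : (4*Real.pi^2) ≤ E := by rw [hE]; nlinarith [sq_nonneg Real.pi, sq_nonneg D]
          have hr_pow0 : (0:ℝ) ≤ r^(k-j) := pow_nonneg hr0 _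
          have hβ_pow0 : (0:ℝ) ≤ (β^2)^(k-j) := pow_nonneg (sq_nonneg β) _
          nlinarith [sq_nonneg (Real.sin (2*Real.pi*β^(k-j)))]
        have hd_inj : ∀ a ∈ good.filter (fun k => ¬ a ≤ j), True → True := fun _ _ _ => trivial
        have hd_inj' : ∀ a ∈ good.filter (fun k => ¬ k ≤ j), ∀ b ∈ good.filter (fun k => ¬ k ≤ j),
            a - j = b - j → a = b := by
          intro a ha b hb hab
          rw [Finset.mem_filter] at ha hb
          omega
        have himg : ∑ m ∈ (good.filter (fun k => ¬ k ≤ j)).image (fun k => k - j), r^m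
            = ∑ k ∈ good.filter (fun k => ¬ k ≤ j), r^(k-j) := Finset.sum_image hd_inj'
        have hmem : ∀ m ∈ (good.filter (fun k => ¬ k ≤ j)).image (fun k => k - j), M+1 ≤ m := by
          intro m hm
          obtain ⟨k, hk, rfl⟩ := Finset.mem_image.mp hm
          rw [Finset.mem_filter] at hk
          obtain ⟨hkgood, hkj⟩ := hk
          rw [hgood, Finset.mem_filter, hBad] at hkgood
          omega
        calc ∑ k ∈ good.filter (fun k => ¬ k ≤ j), u k
            ≤ ∑ k ∈ good.filter (fun k => ¬ k ≤ j), E * r^(k-j) :=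
              Finset.sum_le_sum hbound
          _ = E * ∑ k ∈ good.filter (fun k => ¬ k ≤ j), r^(k-j) := by
              rw [Finset.mul_sum]
          _ = E * ∑ m ∈ (good.filter (fun k => ¬ k ≤ j)).image (fun k => k - j), r^m := by
              rw [himg]
          _ ≤ E * (r^(M+1) * (1-r)⁻¹) :=
              mul_le_mul_of_nonneg_left (geom_tail hr0 hr1 M _ hmem) hE0.le
          _ ≤ 1/4 := by
              have hrM : r^(M+1) ≤ r^M := by
                rw [pow_succ]
                nlinarith [pow_nonneg hr0 M]
              have h5 : E * (r^(M+1) * (1-r)⁻¹) ≤ E * (1-r)⁻¹ * r^M := by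
                have := mul_le_mul_of_nonneg_left hrM (mul_nonneg hE0.le hinv0)
                nlinarith [this]
              linarith [hM]
      linarith
    have hineq := prod_one_sub_ge good u (fun k => ‖gf p (2*Real.pi*(α^j * β^k))‖)
      (fun k _ => by rw [hu]; positivity)
      (fun k _ => by
        rw [hu]
        simp only
        nlinarith [Real.sin_sq_le_one (2*Real.pi*(α^j * β^k)), sq_nonneg (Real.sin (2*Real.pi*(α^j * β^k)))])
      (fun k _ => norm_nonneg _)
      (fun k _ => by
        rw [hu]
        simp only
        have := norm_gf_ge hp (2*Real.pi*(α^j * β^k))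
        nlinarith [this])
    linarith
  have hgoodnn : (0:ℝ) ≤ ∏ k ∈ good, ‖gf p (2*Real.pi*(α^j * β^k))‖ :=
    Finset.prod_nonneg fun k _ => norm_nonneg _
  have hbadnn : (0:ℝ) ≤ ∏ k ∈ (Finset.range N).filter Bad, ‖gf p (2*Real.pi*(α^j * β^k))‖ :=
    Finset.prod_nonneg fun k _ => norm_nonneg _
  calc c^(2*M+1) * (1/2)
      ≤ (∏ k ∈ (Finset.range N).filter Bad, ‖gf p (2*Real.pi*(α^j * β^k))‖) *
        ∏ k ∈ good, ‖gf p (2*Real.pi*(α^j * β^k))‖ := by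
        refine mul_le_mul hbadbound hgoodbound (by norm_num) hbadnn
    _ = ∏ k ∈ Finset.range N, ‖gf p (2*Real.pi*(α^j * β^k))‖ :=
        Finset.prod_filter_mul_prod_filter_not (Finset.range N) Bad _

end PB

theorem fourier_not_vanishing_and_not_ac (β p : ℝ) (hβ : β ∈ Set.Ioo (1/2 : ℝ) 1)
    (hp : p ∈ Set.Ioo (0 : ℝ) 1) (hPV : IsPVNumber (1 / β))
    (μ : Measure (ℕ → Bool)) [IsProbabilityMeasure μ]
    (hiid : ∀ n : ℕ, ∀ f : Fin n → Bool,
      μ {x | ∀ k : Fin n, x (k : ℕ) = f k}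
        = ENNReal.ofReal (∏ k, if f k then p else 1 - p)) :
    (∃ C : ℝ, 0 < C ∧ ∃ ω : ℕ → ℝ, Filter.Tendsto ω Filter.atTop Filter.atTop ∧
      ∀ k, C ≤ ‖∫ x, Complex.exp (Complex.I * (ω k * x)) ∂(μ.map (piBeta β))‖) ∧
    ¬ (μ.map (piBeta β)) ≪ (volume : Measure ℝ) := by
  have hβ0 : (0:ℝ) < β := lt_trans (by norm_num) hβ.1
  have h1β : (0:ℝ) < 1 - β := by linarith [hβ.2]
  have hπ0 : 0 < Real.pi := Real.pi_pos
  have hmeas : Measurable (piBeta β) := measurable_piBeta hβ0.le hβ.2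
  set ν := μ.map (piBeta β) with hν
  haveI : IsProbabilityMeasure ν := Measure.isProbabilityMeasure_map hmeas.aemeasurable
  have hint_eq : ∀ ω : ℝ, ∫ x, Complex.exp (Complex.I * (ω * x)) ∂ν
      = ∫ x, Complex.exp (Complex.I * (ω * (piBeta β x : ℂ))) ∂μ := by
    intro ω
    rw [hν]
    exact integral_map hmeas.aemeasurable
      (Complex.continuous_exp.comp (continuous_const.mul
        (continuous_const.mul Complex.continuous_ofReal))).aestronglyMeasurable
  obtain ⟨C, hC0, hCbound⟩ := prod_lower hβ hp hPV
  set ω : ℕ → ℝ := fun j => (2*Real.pi/(1-β)) * (1/β)^j with hω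
  have hωtend : Filter.Tendsto ω Filter.atTop Filter.atTop := by
    have h1 : Filter.Tendsto (fun j : ℕ => (1/β)^j) Filter.atTop Filter.atTop :=
      tendsto_pow_atTop_atTop_of_one_lt (by rw [lt_div_iff₀ hβ0]; linarith)
    exact h1.const_mul_atTop (by positivity)
  have hmain : ∀ j, C ≤ ‖∫ x, Complex.exp (Complex.I * (ω j * x)) ∂ν‖ := by
    intro j
    rw [hint_eq]
    have hnorm := (char_approx hβ hp μ hiid (ω j)).norm
    refine ge_of_tendsto hnorm (Filter.Eventually.of_forall fun N => ?_)
    rw [norm_prod]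
    have harg : ∀ k : ℕ, ω j * ((1-β) * β^k) = 2*Real.pi*((1/β)^j * β^k) := by
      intro k
      rw [hω]
      field_simp
    calc C ≤ ∏ k ∈ Finset.range N, ‖gf p (2*Real.pi*((1/β)^j * β^k))‖ := hCbound j N
      _ = ∏ k ∈ Finset.range N, ‖gf p (ω j * ((1-β) * β^k))‖ :=
        Finset.prod_congr rfl fun k _ => by rw [harg k]
  refine ⟨⟨C, hC0, ω, hωtend, hmain⟩, ?_⟩
  intro habs
  set f : ℝ → ℂ := fun v => ((ν.rnDeriv volume v).toReal : ℂ) with hf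
  have hRL := Real.tendsto_integral_exp_smul_cocompact f
  set w : ℕ → ℝ := fun k => -((2*Real.pi)⁻¹ * ω k) with hw
  have hwcc : Filter.Tendsto w Filter.atTop (Filter.cocompact ℝ) := by
    have hb : Filter.Tendsto w Filter.atTop Filter.atBot :=
      tendsto_neg_atTop_atBot.comp (hωtend.const_mul_atTop (by positivity))
    rw [cocompact_eq_atBot_atTop]
    exact hb.mono_right le_sup_left
  have hcomp := hRL.comp hwcc
  have hid : ∀ k, (fun ww : ℝ => ∫ v, Real.fourierChar (-(v * ww)) • f v) (w k)
      = ∫ x, Complex.exp (Complex.I * (ω k * x)) ∂ν := by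
    intro k
    have h1 : ∫ x : ℝ, Complex.exp (Complex.I * (ω k * x)) ∂ν
        = ∫ v, (ν.rnDeriv volume v).toReal •
            Complex.exp (Complex.I * ((ω k : ℝ) * (v : ℂ))) ∂volume :=
      (MeasureTheory.integral_rnDeriv_smul habs).symm
    rw [h1]
    refine integral_congr_ae (Filter.Eventually.of_forall fun v => ?_)
    simp only
    rw [Circle.smul_def, Real.fourierChar_apply]
    have harg : 2*Real.pi*(-(v * (w k))) = ω k * v := by
      rw [hw]
      simp only
      field_simp
    rw [harg, hf]
    simp only
    rw [Complex.real_smul, smul_eq_mul,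
      show Complex.I * ((ω k : ℂ) * (v:ℂ)) = ((ω k * v : ℝ) : ℂ) * Complex.I by push_cast; ring]
    ring
  have hzero := (hcomp.congr hid).norm
  rw [norm_zero] at hzero
  obtain ⟨k, hk⟩ := (hzero.eventually (gt_mem_nhds hC0)).exists
  have := hmain k
  linarith
end MT
end

section
/- Let c > 0, 0 < γ < 1 (playing the role of γ = log β / log τ ∈ (0,1)). Suppose a finite family Π of classes P with sizes ♯P ≥ 1 satisfies: Σ_{P∈Π} ♯P = 2^n, |Π| ≤ c β^{-n}, and there is a subfamily Π̂ ⊆ Π with |Π̂| ≤ ε c β^{-n} and Σ_{P∈Π̂} ♯P ≥ C 2^n. Then Σ_{P∈Π} (♯P)^γ ≤ β^{n(γ−1)} 2^{nγ} ((εc)^{1−γ} + c^{1−γ}(1−C)^γ). -/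
open Finset in
lemma power_mean_aux {ι : Type*} (T : Finset ι) (a : ι → ℝ) (ha : ∀ i, 0 ≤ a i)
    {γ : ℝ} (h0 : 0 < γ) (h1 : γ < 1) :
    ∑ i ∈ T, a i ^ γ ≤ (T.card : ℝ) ^ (1 - γ) * (∑ i ∈ T, a i) ^ γ := by
  have hp : (1 : ℝ) ≤ 1 / γ := (le_div_iff₀ h0).2 (by linarith)
  have h := Real.inner_le_weight_mul_Lp_of_nonneg T hp (fun _ => 1) (fun i => a i ^ γ)
    (fun _ => zero_le_one) (fun i => Real.rpow_nonneg (ha i) γ)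
  have hγne : γ ≠ 0 := ne_of_gt h0
  simp only [one_mul, one_div, inv_inv, Finset.sum_const, nsmul_eq_mul, mul_one] at h
  have : ∑ i ∈ T, (a i ^ γ) ^ γ⁻¹ = ∑ i ∈ T, a i := by
    apply Finset.sum_congr rfl
    intro i _
    rw [← Real.rpow_mul (ha i), mul_inv_cancel₀ hγne, Real.rpow_one]
  rwa [this] at h

theorem combinatorial_power_sum_estimate {ι : Type*} [DecidableEq ι]
    (β c C ε γ : ℝ) (n : ℕ) (hβ : 0 < β) (hβ1 : β < 1)
    (hγ : γ ∈ Set.Ioo (0 : ℝ) 1) (hc : 0 < c) (hε : 0 < ε)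
    (hC : C ∈ Set.Ioo (0 : ℝ) 1)
    (Pa Pb : Finset ι) (s : ι → ℕ)
    (hs : ∀ i ∈ Pa, 1 ≤ s i) (hsum : ∑ i ∈ Pa, s i = 2 ^ n)
    (hcard : (Pa.card : ℝ) ≤ c * (β ^ n)⁻¹)
    (hsub : Pb ⊆ Pa) (hcardb : (Pb.card : ℝ) ≤ ε * c * (β ^ n)⁻¹)
    (hmass : C * 2 ^ n ≤ (∑ i ∈ Pb, s i : ℝ)) :
    ∑ i ∈ Pa, (s i : ℝ) ^ γ
      ≤ (β ^ n) ^ (γ - 1) * ((2 : ℝ) ^ n) ^ γ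
          * ((ε * c) ^ (1 - γ) + c ^ (1 - γ) * (1 - C) ^ γ) := by
  obtain ⟨hγ0, hγ1⟩ := hγ
  obtain ⟨hC0, hC1⟩ := hC
  have hβn : (0 : ℝ) < β ^ n := pow_pos hβ n
  have hβni : (0 : ℝ) < (β ^ n)⁻¹ := inv_pos.2 hβn
  have hsn : ∀ i, (0:ℝ) ≤ (s i : ℝ) := fun i => Nat.cast_nonneg _
  have h2n : (0:ℝ) < 2 ^ n := by positivity
  -- sums in ℝ
  have hsumR : ∑ i ∈ Pa, (s i : ℝ) = 2 ^ n := by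
    rw [← Nat.cast_sum, hsum]; push_cast; ring
  have hsplit : ∑ i ∈ Pa, (s i : ℝ) ^ γ
      = ∑ i ∈ Pb, (s i : ℝ) ^ γ + ∑ i ∈ Pa \ Pb, (s i : ℝ) ^ γ := by
    rw [← Finset.sum_sdiff hsub]; ring
  have hsumb_le : ∑ i ∈ Pb, (s i : ℝ) ≤ 2 ^ n := by
    rw [← hsumR]
    exact Finset.sum_le_sum_of_subset_of_nonneg hsub (fun i _ _ => hsn i)
  have hsumd : ∑ i ∈ Pa \ Pb, (s i : ℝ) = 2 ^ n - ∑ i ∈ Pb, (s i : ℝ) := by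
    have := Finset.sum_sdiff (f := fun i => (s i : ℝ)) hsub
    linarith [this, hsumR]
  have hsumd_le : ∑ i ∈ Pa \ Pb, (s i : ℝ) ≤ (1 - C) * 2 ^ n := by
    rw [hsumd]; nlinarith
  have hcardd : ((Pa \ Pb).card : ℝ) ≤ c * (β ^ n)⁻¹ := by
    refine le_trans ?_ hcard
    exact_mod_cast Finset.card_le_card (Finset.sdiff_subset)
  have h1γ : (0:ℝ) ≤ 1 - γ := by linarith
  -- term 1
  have hb : ∑ i ∈ Pb, (s i : ℝ) ^ γ
      ≤ (ε * c * (β ^ n)⁻¹) ^ (1 - γ) * ((2:ℝ) ^ n) ^ γ := by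
    calc ∑ i ∈ Pb, (s i : ℝ) ^ γ
        ≤ (Pb.card : ℝ) ^ (1 - γ) * (∑ i ∈ Pb, (s i : ℝ)) ^ γ :=
          power_mean_aux Pb _ hsn hγ0 hγ1
      _ ≤ (ε * c * (β ^ n)⁻¹) ^ (1 - γ) * ((2:ℝ) ^ n) ^ γ := by
          gcongr
  -- term 2
  have hd : ∑ i ∈ Pa \ Pb, (s i : ℝ) ^ γ
      ≤ (c * (β ^ n)⁻¹) ^ (1 - γ) * ((1 - C) * 2 ^ n) ^ γ := by
    calc ∑ i ∈ Pa \ Pb, (s i : ℝ) ^ γ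
        ≤ (((Pa \ Pb).card : ℝ)) ^ (1 - γ) * (∑ i ∈ Pa \ Pb, (s i : ℝ)) ^ γ :=
          power_mean_aux _ _ hsn hγ0 hγ1
      _ ≤ (c * (β ^ n)⁻¹) ^ (1 - γ) * ((1 - C) * 2 ^ n) ^ γ := by
          gcongr
  have key : ((β ^ n)⁻¹ : ℝ) ^ (1 - γ) = (β ^ n) ^ (γ - 1) := by
    rw [Real.inv_rpow hβn.le, ← Real.rpow_neg hβn.le, neg_sub]
  rw [hsplit]
  have e1 : (ε * c * (β ^ n)⁻¹) ^ (1 - γ)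
      = (ε * c) ^ (1 - γ) * (β ^ n) ^ (γ - 1) := by
    rw [Real.mul_rpow (by positivity) (by positivity), key]
  have e2 : (c * (β ^ n)⁻¹) ^ (1 - γ) = c ^ (1 - γ) * (β ^ n) ^ (γ - 1) := by
    rw [Real.mul_rpow (by positivity) (by positivity), key]
  have e3 : ((1 - C) * 2 ^ n : ℝ) ^ γ = (1 - C) ^ γ * ((2:ℝ) ^ n) ^ γ := by
    rw [Real.mul_rpow (by linarith) (by positivity)]
  rw [e1] at hb
  rw [e2, e3] at hd
  nlinarith [hb, hd]
end
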